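/- If π_d(θ) = β·π_t(θ) + (1−β)·c for constants β, c ∈ [0,1], and π_t is increasing with values in (0,1), then t is more accurate than d. -/
import Mathlib

open Set

/-- If `πd = β·πt + (1−β)·c` for constants `β, c ∈ [0,1]` and `πt` is increasing with values
in `(0,1)`, then `t` is more accurate than `d`. -/
theorem stmt_5 (Θ : Set ℝ) (πt πd : ℝ → ℝ) (β c : ℝ)
    (hβ : β ∈ Icc (0:ℝ) 1) (hc : c ∈ Icc (0:ℝ) 1)
    (hrt : ∀ θ ∈ Θ, πt θ ∈ Ioo (0:ℝ) 1)
    (hdef : ∀ θ ∈ Θ, πd θ = β * πt θ + (1 - β) * c)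
    (hmono : ∀ θ ∈ Θ, ∀ θ' ∈ Θ, θ ≤ θ' → πt θ ≤ πt θ') :
    ∀ θ ∈ Θ, ∀ θ' ∈ Θ, θ' < θ →
      πt θ * πd θ' ≥ πd θ * πt θ' ∧
      (1 - πt θ) * (1 - πd θ') ≤ (1 - πd θ) * (1 - πt θ') := by
  intro θ hθ θ' hθ' hlt
  have h1 := hmono θ' hθ' θ hθ hlt.le
  rw [hdef θ hθ, hdef θ' hθ']
  obtain ⟨hβ0, hβ1⟩ := hβ
  obtain ⟨hc0, hc1⟩ := hc
  constructor <;> nlinarith [mul_nonneg (mul_nonneg (sub_nonneg.2 hβ1) hc0) (sub_nonneg.2 h1),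
    mul_nonneg (mul_nonneg (sub_nonneg.2 hβ1) (sub_nonneg.2 hc1)) (sub_nonneg.2 h1)]
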